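/- Let ℓ ≥ 1 and m = 2ℓ. The space of complex skew-symmetric m×m matrices A with det(A^{(2k)}) ≠ 0 for all k = 1, …, ℓ (with the subspace topology from the space of m×m complex matrices) is homotopy equivalent to the ℓ-torus (S¹)^ℓ. -/

import Mathlib

open Matrix

noncomputable section SkewTorus

/-- Splitting equivalence for indices. -/
def es (n : ℕ) : (Fin 2 ⊕ Fin (2*n)) ≃ Fin (2*(n+1)) :=
  finSumFinEquiv.trans (finCongr (by ring))

lemma castLE_es {n k : ℕ} (h : 2*(k+1) ≤ 2*(n+1)) (hk : 2*k ≤ 2*n)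
    (x : Fin 2 ⊕ Fin (2*k)) :
    Fin.castLE h (es k x) = es n (Sum.map id (Fin.castLE hk) x) := by
  cases x with
  | inl i => apply Fin.ext; simp [es, finCongr]
  | inr j => apply Fin.ext; simp [es, finCongr]

def Bmat (a : ℂ) : Matrix (Fin 2) (Fin 2) ℂ := !![0, a; -a, 0]
def Binv (a : ℂ) : Matrix (Fin 2) (Fin 2) ℂ := !![0, -a⁻¹; a⁻¹, 0]

lemma Bmat_mul_Binv {a : ℂ} (ha : a ≠ 0) : Bmat a * Binv a = 1 := by
  ext i j
  fin_cases i <;> fin_cases j <;>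
    simp [Bmat, Binv, Matrix.mul_apply, Fin.sum_univ_two, ha]

lemma Binv_mul_Bmat {a : ℂ} (ha : a ≠ 0) : Binv a * Bmat a = 1 := by
  ext i j
  fin_cases i <;> fin_cases j <;>
    simp [Bmat, Binv, Matrix.mul_apply, Fin.sum_univ_two, ha]

lemma det_Bmat (a : ℂ) : (Bmat a).det = a^2 := by
  simp [Bmat, Matrix.det_fin_two]; ring

/-- Schur complement entry formula. -/
lemma schur_entry {p : Type*} [Fintype p] (a : ℂ) (C : Matrix (Fin 2) p ℂ)
    (E : Matrix p p ℂ) (i j : p) :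
    (E - (-Cᵀ) * Binv a * C) i j
      = E i j - (C 0 i * C 1 j - C 1 i * C 0 j) * a⁻¹ := by
  simp [Matrix.mul_apply, Binv, Fin.sum_univ_two, Matrix.sub_apply]
  ring

lemma det_skew_block {p : Type*} [Fintype p] [DecidableEq p] {a : ℂ} (ha : a ≠ 0)
    (C : Matrix (Fin 2) p ℂ) (E : Matrix p p ℂ) :
    (fromBlocks (Bmat a) C (-Cᵀ) E).det = a^2 * (E - (-Cᵀ) * Binv a * C).det := by
  letI : Invertible (Bmat a) := ⟨Binv a, Binv_mul_Bmat ha, Bmat_mul_Binv ha⟩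
  rw [det_fromBlocks₁₁, det_Bmat]
  rfl

/-- submatrix of a fromBlocks along Sum.map id g -/
lemma submatrix_fromBlocks_map {p q : Type*} (B : Matrix (Fin 2) (Fin 2) ℂ)
    (C : Matrix (Fin 2) p ℂ) (D : Matrix p (Fin 2) ℂ) (E : Matrix p p ℂ)
    (g : q → p) :
    (fromBlocks B C D E).submatrix (Sum.map id g) (Sum.map id g)
      = fromBlocks B (C.submatrix id g) (D.submatrix g id) (E.submatrix g g) := by
  ext x y
  cases x <;> cases y <;> rfl

lemma schur_submatrix {p q : Type*} [Fintype p] [Fintype q] (a : ℂ)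
    (C : Matrix (Fin 2) p ℂ) (E : Matrix p p ℂ) (g : q → p) :
    (E - (-Cᵀ) * Binv a * C).submatrix g g
      = E.submatrix g g - (-(C.submatrix id g)ᵀ) * Binv a * (C.submatrix id g) := by
  ext i j
  rw [Matrix.submatrix_apply, schur_entry, schur_entry]
  rfl

lemma det_corner {n k : ℕ} (A : Matrix (Fin (2*(n+1))) (Fin (2*(n+1))) ℂ)
    (h : 2*(k+1) ≤ 2*(n+1)) (hk : 2*k ≤ 2*n) {a : ℂ} (ha : a ≠ 0)
    (C : Matrix (Fin 2) (Fin (2*n)) ℂ) (E : Matrix (Fin (2*n)) (Fin (2*n)) ℂ)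
    (hb : A.submatrix (es n) (es n) = fromBlocks (Bmat a) C (-Cᵀ) E) :
    (A.submatrix (Fin.castLE h) (Fin.castLE h)).det
      = a^2 * ((E - (-Cᵀ) * Binv a * C).submatrix (Fin.castLE hk) (Fin.castLE hk)).det := by
  have h1 : (A.submatrix (Fin.castLE h) (Fin.castLE h)).det
      = ((A.submatrix (Fin.castLE h) (Fin.castLE h)).submatrix (es k) (es k)).det :=
    (Matrix.det_submatrix_equiv_self (es k) _).symm
  have h2 : (A.submatrix (Fin.castLE h) (Fin.castLE h)).submatrix (es k) (es k)
      = (A.submatrix (es n) (es n)).submatrix (Sum.map id (Fin.castLE hk))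
          (Sum.map id (Fin.castLE hk)) := by
    ext x y
    simp [Matrix.submatrix_apply, castLE_es h hk]
  have h3 : (-Cᵀ).submatrix (Fin.castLE hk) id
      = -((C.submatrix id (Fin.castLE hk))ᵀ) := rfl
  rw [h1, h2, hb, submatrix_fromBlocks_map, h3, det_skew_block ha, schur_submatrix]

lemma det_corner_one {n : ℕ} (A : Matrix (Fin (2*(n+1))) (Fin (2*(n+1))) ℂ)
    (h : 2*1 ≤ 2*(n+1)) {a : ℂ}
    (C : Matrix (Fin 2) (Fin (2*n)) ℂ) (E : Matrix (Fin (2*n)) (Fin (2*n)) ℂ)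
    (hb : A.submatrix (es n) (es n) = fromBlocks (Bmat a) C (-Cᵀ) E) :
    (A.submatrix (Fin.castLE h) (Fin.castLE h)).det = a^2 := by
  have h2 : (2 : ℕ) = 2*1 := by norm_num
  rw [← Matrix.det_submatrix_equiv_self (finCongr h2)
    (A.submatrix (Fin.castLE h) (Fin.castLE h))]
  have key : (A.submatrix (Fin.castLE h) (Fin.castLE h)).submatrix
      (finCongr h2) (finCongr h2) = Bmat a := by
    ext i j
    have hi : Fin.castLE h (finCongr h2 i) = es n (Sum.inl i) := by
      apply Fin.ext; simp [es, finCongr]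
    have hj : Fin.castLE h (finCongr h2 j) = es n (Sum.inl j) := by
      apply Fin.ext; simp [es, finCongr]
    simp only [Matrix.submatrix_apply, hi, hj]
    exact congrFun (congrFun hb (Sum.inl i)) (Sum.inl j)
  rw [key, det_Bmat]

section Skew

lemma skew_apply {N : ℕ} {A : Matrix (Fin N) (Fin N) ℂ} (hA : Aᵀ = -A) (i j : Fin N) :
    A j i = -A i j := by
  have := congrFun (congrFun hA i) j
  simpa [Matrix.transpose_apply] using this

lemma skew_diag {N : ℕ} {A : Matrix (Fin N) (Fin N) ℂ} (hA : Aᵀ = -A) (i : Fin N) :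
    A i i = 0 := by
  have := skew_apply hA i i
  linear_combination this / 2

end Skew

/-! Block data of a matrix. -/

variable {n : ℕ}

def aval (n : ℕ) (A : Matrix (Fin (2*(n+1))) (Fin (2*(n+1))) ℂ) : ℂ :=
  A (es n (Sum.inl 0)) (es n (Sum.inl 1))

def Cmat (n : ℕ) (A : Matrix (Fin (2*(n+1))) (Fin (2*(n+1))) ℂ) :
    Matrix (Fin 2) (Fin (2*n)) ℂ :=
  fun i j => A (es n (Sum.inl i)) (es n (Sum.inr j))

def Emat (n : ℕ) (A : Matrix (Fin (2*(n+1))) (Fin (2*(n+1))) ℂ) :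
    Matrix (Fin (2*n)) (Fin (2*n)) ℂ :=
  fun i j => A (es n (Sum.inr i)) (es n (Sum.inr j))

def Eprime (n : ℕ) (A : Matrix (Fin (2*(n+1))) (Fin (2*(n+1))) ℂ) :
    Matrix (Fin (2*n)) (Fin (2*n)) ℂ :=
  Emat n A - (-(Cmat n A)ᵀ) * Binv (aval n A) * (Cmat n A)

lemma blocks_eq {A : Matrix (Fin (2*(n+1))) (Fin (2*(n+1))) ℂ} (hA : Aᵀ = -A) :
    A.submatrix (es n) (es n)
      = fromBlocks (Bmat (aval n A)) (Cmat n A) (-(Cmat n A)ᵀ) (Emat n A) := by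
  ext x y
  cases x with
  | inl i =>
    cases y with
    | inl j =>
      have h00 : A (es n (Sum.inl 0)) (es n (Sum.inl 0)) = 0 := skew_diag hA _
      have h11 : A (es n (Sum.inl 1)) (es n (Sum.inl 1)) = 0 := skew_diag hA _
      have h10 : A (es n (Sum.inl 1)) (es n (Sum.inl 0)) = -(aval n A) :=
        skew_apply hA _ _
      simp only [Matrix.submatrix_apply, Matrix.fromBlocks_apply₁₁]
      fin_cases i <;> fin_cases j <;>
        simp [Bmat, aval, h00, h11, h10]
    | inr j => rfl
  | inr i =>
    cases y with
    | inl j =>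
      simp only [Matrix.submatrix_apply, fromBlocks, Sum.elim_inr, Sum.elim_inl,
        Matrix.neg_apply, Matrix.transpose_apply]
      exact skew_apply hA _ _
    | inr j => rfl


lemma Eprime_apply (A : Matrix (Fin (2*(n+1))) (Fin (2*(n+1))) ℂ) (i j : Fin (2*n)) :
    Eprime n A i j = Emat n A i j
      - (Cmat n A 0 i * Cmat n A 1 j - Cmat n A 1 i * Cmat n A 0 j) * (aval n A)⁻¹ :=
  schur_entry _ _ _ _ _

lemma X_apply {p : Type*} [Fintype p] (a : ℂ) (C : Matrix (Fin 2) p ℂ) (i j : p) :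
    ((-Cᵀ) * Binv a * C) i j = (C 0 i * C 1 j - C 1 i * C 0 j) * a⁻¹ := by
  simp [Matrix.mul_apply, Binv, Fin.sum_univ_two]
  ring

lemma Eprime_skew {A : Matrix (Fin (2*(n+1))) (Fin (2*(n+1))) ℂ} (hA : Aᵀ = -A) :
    (Eprime n A)ᵀ = -(Eprime n A) := by
  ext i j
  have h1 : Emat n A j i = -(Emat n A i j) := skew_apply hA _ _
  simp only [Matrix.transpose_apply, Matrix.neg_apply, Eprime_apply, h1]
  ring

lemma aval_ne {A : Matrix (Fin (2*(n+1))) (Fin (2*(n+1))) ℂ} (hA : Aᵀ = -A)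
    (hdet : ∀ k : ℕ, 1 ≤ k → ∀ hk : 2 * k ≤ 2 * (n+1),
      (A.submatrix (Fin.castLE hk) (Fin.castLE hk)).det ≠ 0) :
    aval n A ≠ 0 := by
  have h2 : 2*1 ≤ 2*(n+1) := by omega
  have hd := hdet 1 le_rfl h2
  rw [det_corner_one A h2 _ _ (blocks_eq hA)] at hd
  exact fun h => hd (by simp [h])

lemma Eprime_minors {A : Matrix (Fin (2*(n+1))) (Fin (2*(n+1))) ℂ} (hA : Aᵀ = -A)
    (hdet : ∀ k : ℕ, 1 ≤ k → ∀ hk : 2 * k ≤ 2 * (n+1),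
      (A.submatrix (Fin.castLE hk) (Fin.castLE hk)).det ≠ 0) :
    ∀ k : ℕ, 1 ≤ k → ∀ hk : 2 * k ≤ 2 * n,
      ((Eprime n A).submatrix (Fin.castLE hk) (Fin.castLE hk)).det ≠ 0 := by
  intro k hk1 hk
  have h : 2*(k+1) ≤ 2*(n+1) := by omega
  have hd := hdet (k+1) (by omega) h
  rw [det_corner A h hk (aval_ne hA hdet) _ _ (blocks_eq hA)] at hd
  exact fun h0 => hd (by rw [show Emat n A - (-(Cmat n A)ᵀ) * Binv (aval n A) * Cmat n A
    = Eprime n A from rfl, h0, mul_zero])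

/-- Reconstruction. -/
def recon (n : ℕ) (a : ℂ) (C : Matrix (Fin 2) (Fin (2*n)) ℂ)
    (E' : Matrix (Fin (2*n)) (Fin (2*n)) ℂ) :
    Matrix (Fin (2*(n+1))) (Fin (2*(n+1))) ℂ :=
  (fromBlocks (Bmat a) C (-Cᵀ) (E' + (-Cᵀ) * Binv a * C)).submatrix
    (es n).symm (es n).symm

lemma recon_blocks (a : ℂ) (C : Matrix (Fin 2) (Fin (2*n)) ℂ)
    (E' : Matrix (Fin (2*n)) (Fin (2*n)) ℂ) :
    (recon n a C E').submatrix (es n) (es n)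
      = fromBlocks (Bmat a) C (-Cᵀ) (E' + (-Cᵀ) * Binv a * C) := by
  ext x y
  simp [recon, Matrix.submatrix_apply]

lemma recon_skew (a : ℂ) (C : Matrix (Fin 2) (Fin (2*n)) ℂ)
    {E' : Matrix (Fin (2*n)) (Fin (2*n)) ℂ} (hE' : E'ᵀ = -E') :
    (recon n a C E')ᵀ = -(recon n a C E') := by
  have hsk : ∀ u v, (fromBlocks (Bmat a) C (-Cᵀ) (E' + (-Cᵀ) * Binv a * C)) v u
      = -((fromBlocks (Bmat a) C (-Cᵀ) (E' + (-Cᵀ) * Binv a * C)) u v) := by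
    intro u v
    have hE'a : ∀ i j, E' j i = -(E' i j) := fun i j => by
      have := congrFun (congrFun hE' i) j
      simpa [Matrix.transpose_apply] using this
    cases u with
    | inl i =>
      cases v with
      | inl j => fin_cases i <;> fin_cases j <;> simp [fromBlocks, Bmat]
      | inr j => simp [fromBlocks]
    | inr i =>
      cases v with
      | inl j => simp [fromBlocks]
      | inr j =>
        simp only [Matrix.fromBlocks_apply₂₂, Matrix.add_apply, X_apply, hE'a i j]
        ring
  ext x y
  simp only [Matrix.transpose_apply, Matrix.neg_apply, recon, Matrix.submatrix_apply]
  exact hsk _ _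

lemma recon_minors (a : ℂ) (ha : a ≠ 0) (C : Matrix (Fin 2) (Fin (2*n)) ℂ)
    (E' : Matrix (Fin (2*n)) (Fin (2*n)) ℂ)
    (hE' : ∀ k : ℕ, 1 ≤ k → ∀ hk : 2 * k ≤ 2 * n,
      (E'.submatrix (Fin.castLE hk) (Fin.castLE hk)).det ≠ 0) :
    ∀ k : ℕ, 1 ≤ k → ∀ hk : 2 * k ≤ 2 * (n+1),
      ((recon n a C E').submatrix (Fin.castLE hk) (Fin.castLE hk)).det ≠ 0 := by
  intro k hk1 hk
  obtain ⟨k', rfl⟩ : ∃ k', k = k' + 1 := ⟨k - 1, by omega⟩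
  have hk' : 2*k' ≤ 2*n := by omega
  rw [det_corner (recon n a C E') hk hk' ha _ _ (recon_blocks a C E'),
    add_sub_cancel_right]
  apply mul_ne_zero (pow_ne_zero _ ha)
  rcases Nat.eq_zero_or_pos k' with h0 | hpos
  · subst h0
    haveI : IsEmpty (Fin (2*0)) := ⟨fun i => absurd i.2 (by omega)⟩
    simp [Matrix.det_isEmpty]
  · exact hE' k' hpos hk'

lemma aval_recon (a : ℂ) (C : Matrix (Fin 2) (Fin (2*n)) ℂ)
    (E' : Matrix (Fin (2*n)) (Fin (2*n)) ℂ) : aval n (recon n a C E') = a := by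
  have := congrFun (congrFun (recon_blocks a C E') (Sum.inl 0)) (Sum.inl 1)
  simpa [aval, Bmat] using this

lemma Cmat_recon (a : ℂ) (C : Matrix (Fin 2) (Fin (2*n)) ℂ)
    (E' : Matrix (Fin (2*n)) (Fin (2*n)) ℂ) : Cmat n (recon n a C E') = C := by
  ext i j
  have := congrFun (congrFun (recon_blocks a C E') (Sum.inl i)) (Sum.inr j)
  simpa [Cmat] using this

lemma Emat_recon (a : ℂ) (C : Matrix (Fin 2) (Fin (2*n)) ℂ)
    (E' : Matrix (Fin (2*n)) (Fin (2*n)) ℂ) :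
    Emat n (recon n a C E') = E' + (-Cᵀ) * Binv a * C := by
  ext i j
  have := congrFun (congrFun (recon_blocks a C E') (Sum.inr i)) (Sum.inr j)
  simpa [Emat] using this

lemma Eprime_recon (a : ℂ) (C : Matrix (Fin 2) (Fin (2*n)) ℂ)
    (E' : Matrix (Fin (2*n)) (Fin (2*n)) ℂ) : Eprime n (recon n a C E') = E' := by
  rw [Eprime, Emat_recon, Cmat_recon, aval_recon, add_sub_cancel_right]

lemma recon_aval {A : Matrix (Fin (2*(n+1))) (Fin (2*(n+1))) ℂ} (hA : Aᵀ = -A) :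
    recon n (aval n A) (Cmat n A) (Eprime n A) = A := by
  rw [recon, Eprime, sub_add_cancel, ← blocks_eq hA]
  ext x y
  simp [Matrix.submatrix_apply]

abbrev Sp (n : ℕ) :=
  {A : Matrix (Fin (2 * n)) (Fin (2 * n)) ℂ // Aᵀ = -A ∧
    ∀ k : ℕ, 1 ≤ k → ∀ hk : 2 * k ≤ 2 * n,
      (A.submatrix (Fin.castLE hk) (Fin.castLE hk)).det ≠ 0}

def Phi (n : ℕ) : Sp (n+1) ≃ₜ
    (({a : ℂ // a ≠ 0} × Matrix (Fin 2) (Fin (2*n)) ℂ) × Sp n) where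
  toFun A := ((⟨aval n A.1, aval_ne A.2.1 A.2.2⟩, Cmat n A.1),
    ⟨Eprime n A.1, Eprime_skew A.2.1, Eprime_minors A.2.1 A.2.2⟩)
  invFun p := ⟨recon n p.1.1.1 p.1.2 p.2.1,
    recon_skew p.1.1.1 p.1.2 p.2.2.1,
    recon_minors p.1.1.1 p.1.1.2 p.1.2 p.2.1 p.2.2.2⟩
  left_inv A := Subtype.ext (recon_aval A.2.1)
  right_inv p := by
    obtain ⟨⟨⟨a, ha⟩, C⟩, ⟨E', hE'⟩⟩ := p
    simp only [Prod.mk.injEq, Subtype.mk.injEq]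
    exact ⟨⟨aval_recon a C E', Cmat_recon a C E'⟩, Eprime_recon a C E'⟩
  continuous_toFun := by
    have cont_entry : ∀ (r c : Fin (2*(n+1))),
        Continuous fun A : Sp (n+1) => A.1 r c := fun r c =>
      (continuous_apply c).comp ((continuous_apply r).comp continuous_subtype_val)
    have cont_aval : Continuous fun A : Sp (n+1) => aval n A.1 := cont_entry _ _
    have cont_C : ∀ i j, Continuous fun A : Sp (n+1) => Cmat n A.1 i j :=
      fun i j => cont_entry _ _
    refine Continuous.prodMk (Continuous.prodMk ?_ ?_) ?_
    · exact Continuous.subtype_mk cont_aval _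
    · exact continuous_pi fun i => continuous_pi fun j => cont_C i j
    · refine Continuous.subtype_mk ?_ _
      refine continuous_pi fun i => continuous_pi fun j => ?_
      have : (fun A : Sp (n+1) => Eprime n A.1 i j)
          = fun A : Sp (n+1) => Emat n A.1 i j
            - (Cmat n A.1 0 i * Cmat n A.1 1 j - Cmat n A.1 1 i * Cmat n A.1 0 j)
              * (aval n A.1)⁻¹ := funext fun A => Eprime_apply A.1 i j
      rw [this]
      exact ((cont_entry _ _)).sub
        ((((cont_C 0 i).mul (cont_C 1 j)).sub ((cont_C 1 i).mul (cont_C 0 j))).mul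
          (cont_aval.inv₀ fun A => aval_ne A.2.1 A.2.2))
  continuous_invFun := by
    set T := ({a : ℂ // a ≠ 0} × Matrix (Fin 2) (Fin (2*n)) ℂ) × Sp n
    have cont_a : Continuous fun p : T => (p.1.1 : ℂ) :=
      continuous_subtype_val.comp (continuous_fst.comp continuous_fst)
    have ha : ∀ p : T, (p.1.1 : ℂ) ≠ 0 := fun p => p.1.1.2
    have cont_C : ∀ i j, Continuous fun p : T => p.1.2 i j := fun i j =>
      (continuous_apply j).comp ((continuous_apply i).comp
        (continuous_snd.comp continuous_fst))
    have cont_E : ∀ i j, Continuous fun p : T => p.2.1 i j := fun i j =>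
      (continuous_apply j).comp ((continuous_apply i).comp
        ((continuous_subtype_val (p := fun A : Matrix (Fin (2 * n)) (Fin (2 * n)) ℂ =>
          Aᵀ = -A ∧ ∀ k : ℕ, 1 ≤ k → ∀ hk : 2 * k ≤ 2 * n,
            (A.submatrix (Fin.castLE hk) (Fin.castLE hk)).det ≠ 0)).comp continuous_snd))
    refine Continuous.subtype_mk ?_ _
    refine continuous_pi fun x => continuous_pi fun y => ?_
    show Continuous fun p : T =>
      (fromBlocks (Bmat (p.1.1 : ℂ)) p.1.2 (-(p.1.2)ᵀ)
        (p.2.1 + (-(p.1.2)ᵀ) * Binv (p.1.1 : ℂ) * p.1.2))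
        ((es n).symm x) ((es n).symm y)
    rcases (es n).symm x with i | i <;> rcases (es n).symm y with j | j
    · simp only [Matrix.fromBlocks_apply₁₁]
      fin_cases i <;> fin_cases j <;>
        simp only [Bmat, Matrix.cons_val_zero, Matrix.cons_val_one, Matrix.head_cons,
          Matrix.of_apply, Matrix.cons_val', Matrix.empty_val',
          Matrix.cons_val_fin_one, Fin.mk_zero, Fin.mk_one]
      · exact continuous_const
      · exact cont_a
      · exact cont_a.neg
      · exact continuous_const
    · simpa only [Matrix.fromBlocks_apply₁₂] using cont_C i j
    · simp only [Matrix.fromBlocks_apply₂₁, Matrix.neg_apply, Matrix.transpose_apply]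
      exact (cont_C j i).neg
    · simp only [Matrix.fromBlocks_apply₂₂, Matrix.add_apply, X_apply]
      exact (cont_E i j).add
        ((((cont_C 0 i).mul (cont_C 1 j)).sub ((cont_C 1 i).mul (cont_C 0 j))).mul
          (cont_a.inv₀ ha))

lemma scal_pos {t r : ℝ} (ht0 : 0 ≤ t) (ht1 : t ≤ 1) (hr : 0 < r) :
    0 < t + (1 - t) * r := by
  rcases eq_or_lt_of_le ht0 with h | h
  · simpa [← h] using hr
  · exact add_pos_of_pos_of_nonneg h (mul_nonneg (by linarith) hr.le)

def sphereHE (n : ℕ) : ContinuousMap.HomotopyEquiv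
    ({a : ℂ // a ≠ 0} × Matrix (Fin 2) (Fin (2*n)) ℂ) (Metric.sphere (0:ℂ) 1) := by
  have hnorm : ∀ p : {a : ℂ // a ≠ 0} × Matrix (Fin 2) (Fin (2*n)) ℂ,
      ‖(p.1 : ℂ)‖ ≠ 0 := fun p => norm_ne_zero_iff.2 p.1.2
  refine
    { toFun := ⟨fun p => ⟨(p.1 : ℂ) * ((‖(p.1 : ℂ)‖⁻¹ : ℝ) : ℂ), ?_⟩, ?_⟩
      invFun := ⟨fun z => (⟨(z : ℂ), ?_⟩, 0), ?_⟩
      left_inv := ?_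
      right_inv := ?_ }
  · rw [mem_sphere_zero_iff_norm, norm_mul, Complex.norm_real, norm_inv, norm_norm,
      mul_inv_cancel₀ (hnorm _)]
  · refine Continuous.subtype_mk ?_ _
    exact (continuous_subtype_val.comp continuous_fst).mul
      (Complex.continuous_ofReal.comp
        (((continuous_norm.comp (continuous_subtype_val.comp continuous_fst))).inv₀ hnorm))
  · intro h
    have hz := mem_sphere_zero_iff_norm.1 z.2
    rw [h] at hz
    simp at hz
  · exact (continuous_subtype_val.subtype_mk _).prodMk continuous_const
  · -- left_inv
    refine ⟨?_⟩
    refine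
      { toFun := fun q =>
          (⟨(q.2.1 : ℂ) * (((q.1 : ℝ) + (1 - (q.1 : ℝ)) * ‖(q.2.1 : ℂ)‖⁻¹ : ℝ) : ℂ), ?_⟩,
            (q.1 : ℝ) • q.2.2)
        continuous_toFun := ?_
        map_zero_left := ?_
        map_one_left := ?_ }
    · refine mul_ne_zero q.2.1.2 ?_
      rw [Ne, Complex.ofReal_eq_zero]
      exact (scal_pos q.1.2.1 q.1.2.2 (inv_pos.2 (norm_pos_iff.2 q.2.1.2))).ne'
    · have ct : Continuous fun q : unitInterval ×
          ({a : ℂ // a ≠ 0} × Matrix (Fin 2) (Fin (2*n)) ℂ) => (q.1 : ℝ) :=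
        continuous_subtype_val.comp continuous_fst
      have ca : Continuous fun q : unitInterval ×
          ({a : ℂ // a ≠ 0} × Matrix (Fin 2) (Fin (2*n)) ℂ) => (q.2.1 : ℂ) :=
        continuous_subtype_val.comp (continuous_fst.comp continuous_snd)
      refine Continuous.prodMk (Continuous.subtype_mk ?_ _) ?_
      · exact ca.mul (Complex.continuous_ofReal.comp
          (ct.add ((continuous_const.sub ct).mul
            ((continuous_norm.comp ca).inv₀ fun q => hnorm q.2))))
      · exact ct.smul (continuous_snd.comp continuous_snd)
    · intro p
      refine Prod.ext (Subtype.ext ?_) ?_ <;> simp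
    · intro p
      refine Prod.ext (Subtype.ext ?_) ?_ <;> simp
  · -- right_inv
    have : ∀ z : Metric.sphere (0:ℂ) 1, (z : ℂ) * ((‖(z : ℂ)‖⁻¹ : ℝ) : ℂ) = (z : ℂ) := by
      intro z
      have hz : ‖(z : ℂ)‖ = 1 := mem_sphere_zero_iff_norm.1 z.2
      rw [hz]
      simp
    refine ⟨?_⟩
    have heq : ∀ f g : C(Metric.sphere (0:ℂ) 1, Metric.sphere (0:ℂ) 1),
        f = g → f.Homotopic g → True := fun _ _ _ _ => trivial
    exact (ContinuousMap.Homotopy.refl _).cast rfl (by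
      ext z
      exact (this z).symm) |>.symm

def piSplit (N : ℕ) (X : Type*) [TopologicalSpace X] :
    (X × (Fin N → X)) ≃ₜ (Fin (N+1) → X) where
  toFun p := Fin.cons p.1 p.2
  invFun f := (f 0, fun i => f i.succ)
  left_inv p := by simp
  right_inv f := by
    ext i
    refine Fin.cases ?_ (fun j => ?_) i <;> simp
  continuous_toFun := by
    refine continuous_pi fun i => ?_
    refine Fin.cases ?_ (fun j => ?_) i
    · simpa using (continuous_fst :
        Continuous fun p : X × (Fin N → X) => p.1)
    · simpa using (show Continuous fun p : X × (Fin N → X) => p.2 j from (continuous_apply j).comp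
        (continuous_snd : Continuous fun p : X × (Fin N → X) => p.2))
  continuous_invFun :=
    (continuous_apply 0).prodMk (continuous_pi fun i => continuous_apply _)

def heSubsingleton {X Y : Type*} [TopologicalSpace X] [TopologicalSpace Y]
    [Subsingleton X] [Subsingleton Y] (x0 : X) (y0 : Y) :
    ContinuousMap.HomotopyEquiv X Y where
  toFun := ContinuousMap.const X y0
  invFun := ContinuousMap.const Y x0
  left_inv := by
    have h : (ContinuousMap.const Y x0).comp (ContinuousMap.const X y0)
        = ContinuousMap.id X := ContinuousMap.ext fun x => Subsingleton.elim _ _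
    rw [h]
  right_inv := by
    have h : (ContinuousMap.const X y0).comp (ContinuousMap.const Y x0)
        = ContinuousMap.id Y := ContinuousMap.ext fun y => Subsingleton.elim _ _
    rw [h]

lemma mainSp : ∀ N : ℕ,
    Nonempty (ContinuousMap.HomotopyEquiv (Sp N) (Fin N → Metric.sphere (0:ℂ) 1))
  | 0 => by
    haveI : IsEmpty (Fin (2*0)) := ⟨fun i => absurd i.2 (by omega)⟩
    haveI : Subsingleton (Matrix (Fin (2*0)) (Fin (2*0)) ℂ) :=
      ⟨fun a b => by ext i j; exact absurd i.2 (by omega)⟩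
    exact ⟨heSubsingleton
      ⟨0, by simp, fun k hk h2 => absurd h2 (by omega)⟩ (fun i => i.elim0)⟩
  | (N+1) => by
    obtain ⟨ih⟩ := mainSp N
    exact ⟨(Phi N).toHomotopyEquiv.trans (((sphereHE N).prodCongr ih).trans
      (piSplit N _).toHomotopyEquiv)⟩

end SkewTorus

/-- The space of complex skew-symmetric `2ℓ × 2ℓ` matrices `A` with
`det (A^(2k)) ≠ 0` for `k = 1, …, ℓ` is homotopy equivalent to the `ℓ`-torus
`(S¹)^ℓ`. -/
theorem skew_cholesky_complement_homotopy_torus (ℓ : ℕ) (hℓ : 1 ≤ ℓ) :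
    Nonempty (ContinuousMap.HomotopyEquiv
      {A : Matrix (Fin (2 * ℓ)) (Fin (2 * ℓ)) ℂ // Aᵀ = -A ∧
        ∀ k : ℕ, 1 ≤ k → ∀ hk : 2 * k ≤ 2 * ℓ,
          (A.submatrix (Fin.castLE hk) (Fin.castLE hk)).det ≠ 0}
      (Fin ℓ → Metric.sphere (0 : ℂ) 1)) :=
  mainSp ℓ
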